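/- Deligne splitting: let (W_•, F^•) be a mixed Hodge structure on a finite-dimensional real vector space V. Then there exists a unique family of complex subspaces (I^{p,q})_{(p,q) ∈ ℤ×ℤ} of V_ℂ such that: (i) V_ℂ is the internal direct sum of the I^{p,q}; (ii) for every n, (W_n)_ℂ = ⊕_{p+q ≤ n} I^{p,q}; (iii) for every p, F^p = ⊕_{r ≥ p, s ∈ ℤ} I^{r,s}; and (iv) for every (p,q), I^{p,q} ≡ σ(I^{q,p}) modulo ⊕_{r < p, s < q} I^{r,s}, i.e. the images of I^{p,q} and of σ(I^{q,p}) in the quotient of V_ℂ by the subspace ⊕_{r < p, s < q} I^{r,s} coincide. -/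

import Mathlib

open scoped TensorProduct

private lemma sigmaC_aux (V : Type*) [AddCommGroup V] [Module ℝ V] (c : ℂ) (x : ℂ ⊗[ℝ] V) :
    TensorProduct.map Complex.conjAe.toLinearMap LinearMap.id (c • x) =
      (starRingEnd ℂ) c • TensorProduct.map Complex.conjAe.toLinearMap LinearMap.id x := by
  induction x using TensorProduct.induction_on with
  | zero => simp
  | tmul z v => simp [TensorProduct.smul_tmul', smul_eq_mul, map_mul]
  | add x y hx hy => simp only [smul_add, map_add, hx, hy]

/-- The conjugation involution `σ` of the complexification `ℂ ⊗[ℝ] V`,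
as a `conj`-semilinear map. -/
noncomputable def sigmaC (V : Type*) [AddCommGroup V] [Module ℝ V] :
    (ℂ ⊗[ℝ] V) →ₛₗ[starRingEnd ℂ] (ℂ ⊗[ℝ] V) where
  toFun := TensorProduct.map Complex.conjAe.toLinearMap LinearMap.id
  map_add' x y := map_add _ x y
  map_smul' c x := sigmaC_aux V c x


section Sigma
variable {V : Type*} [AddCommGroup V] [Module ℝ V]

lemma sigmaC_tmul (z : ℂ) (v : V) : sigmaC V (z ⊗ₜ[ℝ] v) = (starRingEnd ℂ) z ⊗ₜ[ℝ] v := rfl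

lemma sigmaC_sigmaC (x : ℂ ⊗[ℝ] V) : sigmaC V (sigmaC V x) = x := by
  induction x using TensorProduct.induction_on with
  | zero => simp
  | tmul z v => simp [sigmaC_tmul]
  | add x y hx hy => rw [map_add, map_add, hx, hy]

lemma sigmaC_inj : Function.Injective (sigmaC V) := by
  intro x y h
  have := congrArg (sigmaC V) h
  rwa [sigmaC_sigmaC, sigmaC_sigmaC] at this

lemma mapSigma_mapSigma (S : Submodule ℂ (ℂ ⊗[ℝ] V)) :
    (S.map (sigmaC V)).map (sigmaC V) = S := by
  ext x
  constructor
  · rintro ⟨y, ⟨z, hz, rfl⟩, rfl⟩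
    rwa [sigmaC_sigmaC]
  · intro hx
    exact ⟨sigmaC V x, ⟨x, hx, rfl⟩, sigmaC_sigmaC x⟩

lemma mapSigma_le_iff {S T : Submodule ℂ (ℂ ⊗[ℝ] V)} :
    S.map (sigmaC V) ≤ T ↔ S ≤ T.map (sigmaC V) := by
  constructor
  · intro h
    conv_lhs => rw [← mapSigma_mapSigma (V := V) S]
    exact Submodule.map_mono h
  · intro h
    conv_rhs => rw [← mapSigma_mapSigma (V := V) T]
    exact Submodule.map_mono h

lemma mapSigma_inf (S T : Submodule ℂ (ℂ ⊗[ℝ] V)) :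
    (S ⊓ T).map (sigmaC V) = S.map (sigmaC V) ⊓ T.map (sigmaC V) :=
  Submodule.map_inf _ sigmaC_inj

lemma mapSigma_sup (S T : Submodule ℂ (ℂ ⊗[ℝ] V)) :
    (S ⊔ T).map (sigmaC V) = S.map (sigmaC V) ⊔ T.map (sigmaC V) :=
  Submodule.map_sup _ _ _

lemma mapSigma_iSup {ι : Sort*} (S : ι → Submodule ℂ (ℂ ⊗[ℝ] V)) :
    (⨆ i, S i).map (sigmaC V) = ⨆ i, (S i).map (sigmaC V) :=
  Submodule.map_iSup _ _

lemma mapSigma_baseChange (p : Submodule ℝ V) :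
    (p.baseChange ℂ).map (sigmaC V) = p.baseChange ℂ := by
  have h : ∀ q : Submodule ℝ V, (q.baseChange ℂ).map (sigmaC V) ≤ q.baseChange ℂ := by
    intro q
    rw [Submodule.baseChange_eq_span, Submodule.map_span]
    refine Submodule.span_le.2 ?_
    rintro - ⟨-, ⟨v, hv, rfl⟩, rfl⟩
    have : sigmaC V ((1 : ℂ) ⊗ₜ[ℝ] v) = (1 : ℂ) ⊗ₜ[ℝ] v := by simp [sigmaC_tmul]
    rw [TensorProduct.mk_apply, this]
    exact Submodule.subset_span ⟨v, hv, rfl⟩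
  refine le_antisymm (h p) ?_
  conv_lhs => rw [← mapSigma_mapSigma (V := V) (p.baseChange ℂ)]
  exact Submodule.map_mono (h p)

lemma baseChange_mono {p q : Submodule ℝ V} (h : p ≤ q) :
    p.baseChange ℂ ≤ q.baseChange ℂ :=
  Submodule.baseChange_mono ℂ h

end Sigma

namespace DeligneAux

variable {R M : Type*} [Ring R] [AddCommGroup M] [Module R M]

def Tpart (Wc G : ℤ → Submodule R M) (q n : ℤ) : Submodule R M :=
  ⨆ (j : ℤ) (_ : 2 ≤ j), G (q - j + 1) ⊓ Wc (n - j)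
def Kpart (Wc G : ℤ → Submodule R M) (q n : ℤ) : Submodule R M :=
  G q ⊓ Wc n ⊔ Tpart Wc G q n
def Isp (Wc F G : ℤ → Submodule R M) (pq : ℤ × ℤ) : Submodule R M :=
  F pq.1 ⊓ Wc (pq.1 + pq.2) ⊓ Kpart Wc G pq.2 (pq.1 + pq.2)
structure MHData (Wc F G : ℤ → Submodule R M) (a cF cG : ℤ) : Prop where
  hW : Monotone Wc
  hWa : ∀ n, n ≤ a → Wc n = ⊥
  hF : Antitone F
  hG : Antitone G
  hFc : ∀ p, cF ≤ p → F p = ⊥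
  hGc : ∀ q, cG ≤ q → G q = ⊥
  hD : ∀ n p, (F p ⊓ Wc n ⊔ Wc (n - 1)) ⊓ (G (n - p + 1) ⊓ Wc n ⊔ Wc (n - 1)) = Wc (n - 1)
  hS : ∀ n p, F p ⊓ Wc n ⊔ G (n - p + 1) ⊓ Wc n ⊔ Wc (n - 1) = Wc n
variable {Wc F G : ℤ → Submodule R M} {a cF cG : ℤ}

lemma Tpart_le_W (hW : Monotone Wc) (q n : ℤ) : Tpart Wc G q n ≤ Wc (n - 2) := by
  refine iSup₂_le fun j hj => ?_
  exact inf_le_right.trans (hW (by omega))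

lemma Kpart_le_W (hW : Monotone Wc) (q n : ℤ) : Kpart Wc G q n ≤ Wc n :=
  sup_le inf_le_right ((Tpart_le_W hW q n).trans (hW (by omega)))

lemma Kpart_mono (hW : Monotone Wc) (hG : Antitone G) {q q' n n' : ℤ}
    (hq : q' ≤ q) (hn : n ≤ n') : Kpart Wc G q n ≤ Kpart Wc G q' n' := by
  refine sup_le (le_sup_of_le_left (inf_le_inf (hG hq) (hW hn))) (iSup₂_le fun j hj => ?_)
  refine le_sup_of_le_right (le_trans ?_ (le_iSup₂ (f := fun j _ => G (q' - j + 1) ⊓ Wc (n' - j))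
    (j + (n' - n)) (by omega)))
  exact inf_le_inf (hG (by omega)) (hW (by omega))

lemma Tpart_le_Kpart_pred (hW : Monotone Wc) (hG : Antitone G) (q n : ℤ) :
    Tpart Wc G q n ≤ Kpart Wc G (q - 1) (n - 1) := by
  refine iSup₂_le fun j hj => ?_
  rcases eq_or_lt_of_le hj with rfl | hj'
  · exact le_sup_of_le_left (inf_le_inf (hG (by omega)) (hW (by omega)))
  · refine le_sup_of_le_right (le_trans ?_ (le_iSup₂
      (f := fun j _ => G (q - 1 - j + 1) ⊓ Wc (n - 1 - j)) (j - 1) (by omega)))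
    have e1 : q - 1 - (j - 1) + 1 = q - j + 1 := by ring
    have e2 : n - 1 - (j - 1) = n - j := by ring
    rw [e1, e2]

lemma Kpart_le_Tpart (hW : Monotone Wc) (hG : Antitone G) {s m q n : ℤ}
    (h1 : s < q) (h2 : m - s < n - q) : Kpart Wc G s m ≤ Tpart Wc G q n := by
  refine sup_le ?_ (iSup₂_le fun j hj => ?_)
  · refine le_trans ?_ (le_iSup₂ (f := fun j _ => G (q - j + 1) ⊓ Wc (n - j)) (n - m) (by omega))
    exact inf_le_inf (hG (by omega)) (hW (by omega))
  · refine le_trans ?_ (le_iSup₂ (f := fun j _ => G (q - j + 1) ⊓ Wc (n - j))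
      (n - m + j) (by omega))
    exact inf_le_inf (hG (by omega)) (hW (by omega))


lemma MHData.swap (h : MHData Wc F G a cF cG) : MHData Wc G F a cG cF := by
  refine ⟨h.hW, h.hWa, h.hG, h.hF, h.hGc, h.hFc, fun n p => ?_, fun n p => ?_⟩
  · have := h.hD n (n - p + 1)
    rw [show n - (n - p + 1) + 1 = p by ring, inf_comm] at this
    exact this
  · have := h.hS n (n - p + 1)
    rw [show n - (n - p + 1) + 1 = p by ring,
      sup_comm (F (n - p + 1) ⊓ Wc n) (G p ⊓ Wc n)] at this
    exact this

lemma Kpart_eq_bot (h : MHData Wc F G a cF cG) {s n : ℤ} (h1 : cG ≤ s)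
    (h2 : cG + (n - a) ≤ s) : Kpart Wc G s n = ⊥ := by
  refine le_bot_iff.1 (sup_le ?_ (iSup₂_le fun j hj => ?_))
  · rw [h.hGc s h1]; exact inf_le_left
  · rcases le_or_gt (n - j) a with hja | hja
    · rw [h.hWa _ hja]; exact inf_le_right
    · rw [h.hGc (s - j + 1) (by omega)]; exact inf_le_left

lemma Isp_eq_bot_of_le (h : MHData Wc F G a cF cG) {pq : ℤ × ℤ} (hn : pq.1 + pq.2 ≤ a) :
    Isp Wc F G pq = ⊥ := by
  refine le_bot_iff.1 ?_
  rw [Isp, h.hWa _ hn]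
  exact inf_le_left.trans inf_le_right

set_option maxHeartbeats 2000000 in
lemma grSurj (h : MHData Wc F G a cF cG) {p q n : ℤ} (hpq : p + q = n) :
    (F p ⊓ Wc n ⊔ Wc (n - 1)) ⊓ (G q ⊓ Wc n ⊔ Wc (n - 1)) ≤ Isp Wc F G (p, q) ⊔ Wc (n - 1) := by
  intro x hx
  obtain ⟨hx1, hx2⟩ := hx
  rw [SetLike.mem_coe, Submodule.mem_sup] at hx1
  rw [SetLike.mem_coe] at hx2
  obtain ⟨f, hf, w1, hw1, rfl⟩ := hx1
  have hf2 : f ∈ G q ⊓ Wc n ⊔ Wc (n - 1) := by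
    have he : f = f + w1 - w1 := by abel
    rw [he]
    exact Submodule.sub_mem _ hx2 (Submodule.mem_sup_right hw1)
  have AUX : ∀ k : ℕ, ∃ y, y ∈ F p ⊓ Wc n ∧
      y ∈ Kpart Wc G q n ⊔ Wc (n - 1 - (k : ℤ)) ∧ f - y ∈ Wc (n - 1) := by
    intro k
    induction k with
    | zero =>
      refine ⟨f, hf, ?_, by simp⟩
      refine sup_le_sup (le_sup_left (b := Tpart Wc G q n)) (h.hW (by omega)) hf2
    | succ k ih =>
      obtain ⟨y, hy1, hy2, hy3⟩ := ih
      rw [Submodule.mem_sup] at hy2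
      obtain ⟨u, hu, w, hw, rfl⟩ := hy2
      have hwm : w ∈ Wc (n - 1 - (k : ℤ)) := hw
      rw [← h.hS (n - 1 - (k : ℤ)) p, Submodule.mem_sup] at hwm
      obtain ⟨fg', hfg', w', hw', rfl⟩ := hwm
      rw [Submodule.mem_sup] at hfg'
      obtain ⟨fg, hfg, g, hg, rfl⟩ := hfg'
      refine ⟨u + (fg + g + w') - fg, ?_, ?_, ?_⟩
      · exact Submodule.sub_mem _ hy1 ⟨hfg.1, h.hW (by omega) hfg.2⟩
      · have he : u + (fg + g + w') - fg = (u + g) + w' := by abel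
        rw [he, Submodule.mem_sup]
        refine ⟨u + g, Submodule.add_mem _ hu ?_, w', h.hW (by push_cast; omega) hw', rfl⟩
        -- g ∈ Kpart Wc G q n
        rcases Nat.eq_zero_or_pos k with rfl | hk
        · show g ∈ G q ⊓ Wc n ⊔ Tpart Wc G q n
          refine Submodule.mem_sup_left ?_
          exact ⟨h.hG (by push_cast; omega) hg.1, h.hW (by push_cast; omega) hg.2⟩
        · show g ∈ G q ⊓ Wc n ⊔ Tpart Wc G q n
          refine Submodule.mem_sup_right ?_
          refine (le_iSup₂ (f := fun j (_ : (2:ℤ) ≤ j) => G (q - j + 1) ⊓ Wc (n - j))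
            ((k : ℤ) + 1) (by omega)) ?_
          exact ⟨h.hG (by omega) hg.1, h.hW (by omega) hg.2⟩
      · have he : f - (u + (fg + g + w') - fg) = (f - (u + (fg + g + w'))) + fg := by abel
        rw [he]
        exact Submodule.add_mem _ hy3 (h.hW (by omega) hfg.2)
  obtain ⟨y, hy1, hy2, hy3⟩ := AUX (n - 1 - a).toNat
  have hbot : Wc (n - 1 - ((n - 1 - a).toNat : ℤ)) = ⊥ := h.hWa _ (by omega)
  rw [hbot, sup_bot_eq] at hy2
  rw [Submodule.mem_sup]
  refine ⟨y, ?_, (f - y) + w1, Submodule.add_mem _ hy3 hw1, by abel⟩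
  show y ∈ F p ⊓ Wc (p + q) ⊓ Kpart Wc G q (p + q)
  rw [hpq]
  exact ⟨hy1, hy2⟩


lemma Isp_def (p q : ℤ) :
    Isp Wc F G (p, q) = F p ⊓ Wc (p + q) ⊓ Kpart Wc G q (p + q) := rfl

lemma grEq (h : MHData Wc F G a cF cG) {p q n : ℤ} (hpq : p + q = n) :
    Isp Wc F G (p, q) ⊔ Wc (n - 1)
      = (F p ⊓ Wc n ⊔ Wc (n - 1)) ⊓ (G q ⊓ Wc n ⊔ Wc (n - 1)) := by
  refine le_antisymm (sup_le (le_inf ?_ ?_) (le_inf le_sup_right le_sup_right)) (grSurj h hpq)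
  · rw [Isp_def, hpq]
    exact le_sup_of_le_left inf_le_left
  · rw [Isp_def, hpq]
    refine le_trans inf_le_right (sup_le le_sup_left ?_)
    exact le_sup_of_le_right ((Tpart_le_W h.hW q n).trans (h.hW (by omega)))

lemma injStep (h : MHData Wc F G a cF cG) {p q n : ℤ} (hpq : p + q = n) :
    Isp Wc F G (p, q) ⊓ Wc (n - 1) ≤ Isp Wc F G (p, q - 1) ⊓ Wc (n - 2) := by
  intro x hx
  obtain ⟨hxI, hxw⟩ := hx
  rw [SetLike.mem_coe, Isp_def, hpq] at hxI
  rw [SetLike.mem_coe] at hxw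
  obtain ⟨⟨hx1, hx2⟩, hx3⟩ := hxI
  simp only [SetLike.mem_coe] at hx1 hx2 hx3
  rw [Kpart, Submodule.mem_sup] at hx3
  obtain ⟨g, hg, t, ht, rfl⟩ := hx3
  have htw : t ∈ Wc (n - 2) := Tpart_le_W h.hW q n ht
  have hgw : g ∈ Wc (n - 1) := by
    have he : g = g + t - t := by abel
    rw [he]
    exact Submodule.sub_mem _ hxw (h.hW (by omega) htw)
  -- x ∈ Wc (n - 2) via hD at weight n-1
  have hd := h.hD (n - 1) p
  rw [show n - 1 - p + 1 = q by omega, show n - 1 - 1 = n - 2 by ring] at hd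
  have hxw2 : g + t ∈ Wc (n - 2) := by
    refine le_of_eq hd (Submodule.mem_inf.2 ⟨Submodule.mem_sup_left ⟨hx1, hxw⟩, ?_⟩)
    exact Submodule.mem_sup.2 ⟨g, ⟨hg.1, hgw⟩, t, htw, rfl⟩
  refine ⟨?_, hxw2⟩
  rw [SetLike.mem_coe, Isp_def, show p + (q - 1) = n - 1 by omega, Kpart]
  refine ⟨⟨hx1, hxw⟩, ?_⟩
  refine Submodule.add_mem _ (Submodule.mem_sup_left ⟨h.hG (by omega) hg.1, hgw⟩) ?_
  exact Tpart_le_Kpart_pred h.hW h.hG q n ht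

lemma inj (h : MHData Wc F G a cF cG) {p q n : ℤ} (hpq : p + q = n) :
    Isp Wc F G (p, q) ⊓ Wc (n - 1) = ⊥ := by
  have AUX : ∀ k : ℕ, Isp Wc F G (p, q) ⊓ Wc (n - 1)
      ≤ Isp Wc F G (p, q - k) ⊓ Wc (n - 1 - k) := by
    intro k
    induction k with
    | zero => simp
    | succ k ih =>
      have step := injStep h (show p + (q - (k:ℤ)) = n - (k:ℤ) by omega)
      have e1 : q - (k:ℤ) - 1 = q - ((k:ℕ)+1 : ℕ) := by push_cast; ring
      have e2 : n - (k:ℤ) - 2 = n - 1 - ((k:ℕ)+1 : ℕ) := by push_cast; ring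
      have e3 : n - (k:ℤ) - 1 = n - 1 - (k:ℕ) := by push_cast; ring
      rw [e1, e2, e3] at step
      exact ih.trans step
  refine le_bot_iff.1 ((AUX (n - 1 - a).toNat).trans ?_)
  rw [h.hWa (n - 1 - ((n - 1 - a).toNat : ℤ)) (by omega)]
  exact inf_le_right

lemma grIndep (h : MHData Wc F G a cF cG) {p q n : ℤ} (hpq : p + q = n) :
    (F p ⊓ Wc n ⊔ Wc (n - 1)) ⊓ (G q ⊓ Wc n ⊔ Wc (n - 1)) ⊓
      (F (p + 1) ⊓ Wc n ⊔ (G (q + 1) ⊓ Wc n ⊔ Wc (n - 1))) ≤ Wc (n - 1) := by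
  intro z hz
  obtain ⟨⟨hz1, hz2⟩, hz3⟩ := hz
  rw [SetLike.mem_coe] at hz1 hz2 hz3
  rw [Submodule.mem_sup] at hz3
  obtain ⟨f, hf, rest, hrest, rfl⟩ := hz3
  rw [Submodule.mem_sup] at hrest
  obtain ⟨g, hg, w, hw, rfl⟩ := hrest
  have hfW : f ∈ Wc (n - 1) := by
    have hd := h.hD n (p + 1)
    rw [show n - (p + 1) + 1 = q by omega] at hd
    refine le_of_eq hd (Submodule.mem_inf.2 ⟨Submodule.mem_sup_left hf, ?_⟩)
    have he : f = (f + (g + w)) - g - w := by abel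
    rw [he]
    exact Submodule.sub_mem _ (Submodule.sub_mem _ hz2
      (Submodule.mem_sup_left ⟨h.hG (by omega) hg.1, hg.2⟩)) (Submodule.mem_sup_right hw)
  have hzf : f + (g + w) - f ∈ Wc (n - 1) := by
    have hd := h.hD n p
    rw [show n - p + 1 = q + 1 by omega] at hd
    refine le_of_eq hd (Submodule.mem_inf.2 ⟨?_, ?_⟩)
    · exact Submodule.sub_mem _ hz1 (Submodule.mem_sup_right hfW)
    · have he : f + (g + w) - f = g + w := by abel
      rw [he]
      exact Submodule.add_mem _ (Submodule.mem_sup_left hg) (Submodule.mem_sup_right hw)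
  have he : f + (g + w) = (f + (g + w) - f) + f := by abel
  rw [he]
  exact Submodule.add_mem _ hzf hfW


lemma Isp_le_FW (hW : Monotone Wc) (hF : Antitone F) {p n r : ℤ} (hr : p ≤ r)
    {s : ℤ} (hs : r + s ≤ n) : Isp Wc F G (r, s) ≤ F p ⊓ Wc n :=
  le_inf ((inf_le_left.trans inf_le_left).trans (hF hr))
    ((inf_le_left.trans inf_le_right).trans (hW hs))

lemma biDecomp (h : MHData Wc F G a cF cG) {r s m : ℤ} (hrs : r + s ≤ m) :
    (F r ⊓ Wc m ⊔ Wc (m - 1)) ⊓ (G s ⊓ Wc m ⊔ Wc (m - 1)) ≤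
      (⨆ (r' : ℤ) (_ : r ≤ r' ∧ s ≤ m - r'), Isp Wc F G (r', m - r')) ⊔ Wc (m - 1) := by
  have AUX : ∀ k : ℕ, ∀ r : ℤ, m - s - k ≤ r → r + s ≤ m →
      (F r ⊓ Wc m ⊔ Wc (m - 1)) ⊓ (G s ⊓ Wc m ⊔ Wc (m - 1)) ≤
      (⨆ (r' : ℤ) (_ : r ≤ r' ∧ s ≤ m - r'), Isp Wc F G (r', m - r')) ⊔ Wc (m - 1) := by
    intro k
    induction k with
    | zero =>
      intro r h1 h2
      have hr : r = m - s := by push_cast at h1; omega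
      subst hr
      refine (grSurj h (show (m - s) + s = m by ring)).trans (sup_le_sup ?_ le_rfl)
      refine le_trans (le_of_eq ?_) (le_iSup₂ (f := fun r' (_ : (m - s : ℤ) ≤ r' ∧ s ≤ m - r')
        => Isp Wc F G (r', m - r')) (m - s) ⟨le_rfl, by omega⟩)
      congr 2
      omega
    | succ k ih =>
      intro r h1 h2
      rcases le_or_gt (m - s - k) r with hr | hr
      · exact ih r hr h2
      · have hre : r = m - s - ((k : ℤ) + 1) := by push_cast at h1; omega
        intro x hx
        obtain ⟨hx1, hx2⟩ := hx
        rw [SetLike.mem_coe, Submodule.mem_sup] at hx1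
        rw [SetLike.mem_coe] at hx2
        obtain ⟨φ, hφ, w, hw, rfl⟩ := hx1
        have hφW : φ ∈ Wc m := hφ.2
        rw [← h.hS m (r + 1), Submodule.mem_sup] at hφW
        obtain ⟨fg', hfg', w2, hw2, rfl⟩ := hφW
        rw [Submodule.mem_sup] at hfg'
        obtain ⟨f, hf, g, hg, rfl⟩ := hfg'
        rw [show m - (r + 1) + 1 = m - r by ring] at hg
        have hφF : f + g + w2 ∈ F r ⊓ Wc m := hφ
        have hgF : g ∈ F r ⊓ Wc m ⊔ Wc (m - 1) := by
          have he : g = (f + g + w2 - f) - w2 := by abel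
          rw [he]
          refine Submodule.sub_mem _ (Submodule.mem_sup_left ?_) (Submodule.mem_sup_right hw2)
          exact Submodule.sub_mem _ hφF ⟨h.hF (by omega) hf.1, hf.2⟩
        have hgH : g ∈ Isp Wc F G (r, m - r) ⊔ Wc (m - 1) :=
          grSurj h (show r + (m - r) = m by ring) ⟨hgF, Submodule.mem_sup_left hg⟩
        rw [Submodule.mem_sup] at hgH
        obtain ⟨i, hi, w3, hw3, hgE⟩ := hgH
        have hx1' : f + w2 + w ∈ F (r + 1) ⊓ Wc m ⊔ Wc (m - 1) :=
          Submodule.mem_sup.2 ⟨f, hf, w2 + w, Submodule.add_mem _ hw2 hw, by abel⟩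
        have hx2' : f + w2 + w ∈ G s ⊓ Wc m ⊔ Wc (m - 1) := by
          have he : f + w2 + w = (f + g + w2 + w) - g := by abel
          rw [he]
          exact Submodule.sub_mem _ hx2
            (Submodule.mem_sup_left ⟨h.hG (by omega) hg.1, hg.2⟩)
        have hIH := ih (r + 1) (by omega) (by omega) ⟨hx1', hx2'⟩
        obtain ⟨y, hy, w4, hw4, hyE⟩ := Submodule.mem_sup.1 hIH
        have hyR : y ∈ ⨆ (r' : ℤ) (_ : r ≤ r' ∧ s ≤ m - r'), Isp Wc F G (r', m - r') := by
          refine (iSup₂_le fun r' hr' => ?_ : (⨆ (r' : ℤ) (_ : r + 1 ≤ r' ∧ s ≤ m - r'),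
            Isp Wc F G (r', m - r')) ≤ _) hy
          exact le_iSup₂ (f := fun r' (_ : r ≤ r' ∧ s ≤ m - r') => Isp Wc F G (r', m - r'))
            r' ⟨by omega, hr'.2⟩
        have hiR : i ∈ ⨆ (r' : ℤ) (_ : r ≤ r' ∧ s ≤ m - r'), Isp Wc F G (r', m - r') :=
          le_iSup₂ (f := fun r' (_ : r ≤ r' ∧ s ≤ m - r') => Isp Wc F G (r', m - r'))
            r ⟨le_rfl, by omega⟩ hi
        have he : f + g + w2 + w = (y + i) + (w4 + w3) := by
          have h1 : f + g + w2 + w = (f + w2 + w) + g := by abel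
          rw [h1, ← hyE, ← hgE]; abel
        rw [he]
        exact Submodule.add_mem _ (Submodule.mem_sup_left (Submodule.add_mem _ hyR hiR))
          (Submodule.mem_sup_right (Submodule.add_mem _ hw4 hw3))
  exact AUX (m - s - r).toNat r (by omega) hrs


lemma Isp_le_F (pq : ℤ × ℤ) : Isp Wc F G pq ≤ F pq.1 := inf_le_left.trans inf_le_left

lemma Isp_le_W (pq : ℤ × ℤ) : Isp Wc F G pq ≤ Wc (pq.1 + pq.2) := inf_le_left.trans inf_le_right

lemma Fdecomp (h : MHData Wc F G a cF cG) (p n : ℤ) :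
    F p ⊓ Wc n ≤ (⨆ (r : ℤ) (_ : p ≤ r), Isp Wc F G (r, n - r)) ⊔ Wc (n - 1) := by
  have AUX : ∀ k : ℕ, ∀ p : ℤ, cF - k ≤ p →
      F p ⊓ Wc n ≤ (⨆ (r : ℤ) (_ : p ≤ r), Isp Wc F G (r, n - r)) ⊔ Wc (n - 1) := by
    intro k
    induction k with
    | zero =>
      intro p hp
      rw [h.hFc p (by push_cast at hp; omega)]
      simp
    | succ k ih =>
      intro p hp
      rcases le_or_gt (cF - k) p with hp' | hp'
      · exact ih p hp'
      · intro x hx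
        obtain ⟨hxF, hxW⟩ := hx
        simp only [SetLike.mem_coe] at hxF hxW
        have hxW2 := hxW
        rw [← h.hS n (p + 1), Submodule.mem_sup] at hxW2
        obtain ⟨fg', hfg', w, hw, rfl⟩ := hxW2
        rw [Submodule.mem_sup] at hfg'
        obtain ⟨f, hf, g, hg, rfl⟩ := hfg'
        rw [show n - (p + 1) + 1 = n - p by ring] at hg
        have hgF : g ∈ F p ⊓ Wc n ⊔ Wc (n - 1) := by
          have he : g = ((f + g + w) - f) - w := by abel
          rw [he]
          refine Submodule.sub_mem _ (Submodule.mem_sup_left ?_) (Submodule.mem_sup_right hw)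
          exact Submodule.sub_mem _ ⟨hxF, hxW⟩ ⟨h.hF (by omega) hf.1, hf.2⟩
        have hgH := grSurj h (show p + (n - p) = n by ring)
          (Submodule.mem_inf.2 ⟨hgF, Submodule.mem_sup_left hg⟩)
        obtain ⟨i, hi, w3, hw3, rfl⟩ := Submodule.mem_sup.1 hgH
        have hfIH := ih (p + 1) (by omega) ⟨hf.1, hf.2⟩
        obtain ⟨y, hy, w4, hw4, rfl⟩ := Submodule.mem_sup.1 hfIH
        have hyR : y ∈ ⨆ (r : ℤ) (_ : p ≤ r), Isp Wc F G (r, n - r) :=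
          (iSup₂_le fun r hr => le_iSup₂ (f := fun r (_ : p ≤ r) => Isp Wc F G (r, n - r))
            r (by omega) : (⨆ (r : ℤ) (_ : p + 1 ≤ r), Isp Wc F G (r, n - r)) ≤ _) hy
        have hiR : i ∈ ⨆ (r : ℤ) (_ : p ≤ r), Isp Wc F G (r, n - r) :=
          le_iSup₂ (f := fun r (_ : p ≤ r) => Isp Wc F G (r, n - r)) p le_rfl hi
        have he : y + w4 + (i + w3) + w = (y + i) + (w4 + (w3 + w)) := by abel
        rw [he]
        exact Submodule.add_mem _ (Submodule.mem_sup_left (Submodule.add_mem _ hyR hiR))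
          (Submodule.mem_sup_right (Submodule.add_mem _ hw4
            (Submodule.add_mem _ hw3 hw)))
  exact AUX (cF - p).toNat p (by omega)

lemma Wdecomp (h : MHData Wc F G a cF cG) (n : ℤ) :
    Wc n ≤ (⨆ (r : ℤ), Isp Wc F G (r, n - r)) ⊔ Wc (n - 1) := by
  have hb := h.hS n (n + 1 - cG)
  rw [show n - (n + 1 - cG) + 1 = cG by ring, h.hGc cG le_rfl, bot_inf_eq, sup_bot_eq] at hb
  calc Wc n = F (n + 1 - cG) ⊓ Wc n ⊔ Wc (n - 1) := hb.symm
    _ ≤ ((⨆ (r : ℤ) (_ : n + 1 - cG ≤ r), Isp Wc F G (r, n - r)) ⊔ Wc (n - 1)) ⊔ Wc (n - 1) :=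
        sup_le_sup (Fdecomp h (n + 1 - cG) n) le_rfl
    _ ≤ (⨆ (r : ℤ), Isp Wc F G (r, n - r)) ⊔ Wc (n - 1) := by
        rw [sup_assoc, sup_idem]
        exact sup_le_sup (iSup₂_le fun r _ => le_iSup (fun r => Isp Wc F G (r, n - r)) r) le_rfl

lemma Wspan (h : MHData Wc F G a cF cG) (n : ℤ) :
    Wc n = ⨆ (pq : ℤ × ℤ) (_ : pq.1 + pq.2 ≤ n), Isp Wc F G pq := by
  refine le_antisymm ?_ (iSup₂_le fun pq hpq => (Isp_le_W pq).trans (h.hW hpq))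
  have AUX : ∀ k : ℕ, ∀ n : ℤ, n ≤ a + k →
      Wc n ≤ ⨆ (pq : ℤ × ℤ) (_ : pq.1 + pq.2 ≤ n), Isp Wc F G pq := by
    intro k
    induction k with
    | zero =>
      intro n hn
      rw [h.hWa n (by omega)]
      exact bot_le
    | succ k ih =>
      intro n hn
      rcases le_or_gt n (a + k) with hn' | hn'
      · exact ih n hn'
      · refine (Wdecomp h n).trans (sup_le (iSup_le fun r => ?_) ?_)
        · exact le_iSup₂ (f := fun pq (_ : pq.1 + pq.2 ≤ n) => Isp Wc F G pq)
            (r, n - r) (by simp)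
        · refine (ih (n - 1) (by omega)).trans (iSup₂_le fun pq hpq => ?_)
          exact le_iSup₂ (f := fun pq (_ : pq.1 + pq.2 ≤ n) => Isp Wc F G pq) pq (by omega)
  exact AUX (n - a).toNat n (by omega)

lemma Fspan (h : MHData Wc F G a cF cG) (p n : ℤ) :
    F p ⊓ Wc n = ⨆ (pq : ℤ × ℤ) (_ : p ≤ pq.1 ∧ pq.1 + pq.2 ≤ n), Isp Wc F G pq := by
  refine le_antisymm ?_ (iSup₂_le fun pq hpq =>
    le_inf ((Isp_le_F pq).trans (h.hF hpq.1)) ((Isp_le_W pq).trans (h.hW hpq.2)))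
  have AUX : ∀ k : ℕ, ∀ n : ℤ, n ≤ a + k →
      F p ⊓ Wc n ≤ ⨆ (pq : ℤ × ℤ) (_ : p ≤ pq.1 ∧ pq.1 + pq.2 ≤ n), Isp Wc F G pq := by
    intro k
    induction k with
    | zero =>
      intro n hn
      rw [h.hWa n (by omega)]
      simp
    | succ k ih =>
      intro n hn
      rcases le_or_gt n (a + k) with hn' | hn'
      · exact ih n hn'
      · intro x hx
        obtain ⟨hxF, hxW⟩ := hx
        simp only [SetLike.mem_coe] at hxF hxW
        obtain ⟨y, hy, w, hw, rfl⟩ := Submodule.mem_sup.1 (Fdecomp h p n ⟨hxF, hxW⟩)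
        have hyF : y ∈ F p :=
          (iSup₂_le fun r hr => (Isp_le_F _).trans (h.hF hr) : (⨆ (r : ℤ) (_ : p ≤ r),
            Isp Wc F G (r, n - r)) ≤ F p) hy
        have hyR : y ∈ ⨆ (pq : ℤ × ℤ) (_ : p ≤ pq.1 ∧ pq.1 + pq.2 ≤ n), Isp Wc F G pq := by
          refine (iSup₂_le fun r hr => ?_ : (⨆ (r : ℤ) (_ : p ≤ r),
            Isp Wc F G (r, n - r)) ≤ _) hy
          exact le_iSup₂ (f := fun pq (_ : p ≤ pq.1 ∧ pq.1 + pq.2 ≤ n) => Isp Wc F G pq)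
            (r, n - r) (by constructor <;> simp [hr])
        have hwR : w ∈ ⨆ (pq : ℤ × ℤ) (_ : p ≤ pq.1 ∧ pq.1 + pq.2 ≤ n), Isp Wc F G pq := by
          have hwF : w ∈ F p := by
            have he : w = (y + w) - y := by abel
            rw [he]
            exact Submodule.sub_mem _ hxF hyF
          refine (iSup₂_le fun pq hpq => ?_ : (⨆ (pq : ℤ × ℤ)
            (_ : p ≤ pq.1 ∧ pq.1 + pq.2 ≤ n - 1), Isp Wc F G pq) ≤ _)
            (ih (n - 1) (by omega) ⟨hwF, hw⟩)
          exact le_iSup₂ (f := fun pq (_ : p ≤ pq.1 ∧ pq.1 + pq.2 ≤ n) => Isp Wc F G pq)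
            pq ⟨hpq.1, by omega⟩
        exact Submodule.add_mem _ hyR hwR
  exact AUX (n - a).toNat n (by omega)


lemma levelIndep (h : MHData Wc F G a cF cG) (n r₀ : ℤ) :
    (⨆ (r : ℤ) (_ : r₀ ≤ r), Isp Wc F G (r, n - r)) ⊓ Wc (n - 1) = ⊥ := by
  have AUX : ∀ k : ℕ, ∀ r₀ : ℤ, cF - k ≤ r₀ →
      (⨆ (r : ℤ) (_ : r₀ ≤ r), Isp Wc F G (r, n - r)) ⊓ Wc (n - 1) = ⊥ := by
    intro k
    induction k with
    | zero =>
      intro r₀ hr₀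
      refine le_bot_iff.1 (inf_le_left.trans (iSup₂_le fun r hr => ?_))
      refine (Isp_le_F _).trans ?_
      rw [h.hFc r (by push_cast at hr₀; omega)]
    | succ k ih =>
      intro r₀ hr₀
      rcases le_or_gt (cF - k) r₀ with hr' | hr'
      · exact ih r₀ hr'
      · have hsplit : (⨆ (r : ℤ) (_ : r₀ ≤ r), Isp Wc F G (r, n - r)) ≤
            Isp Wc F G (r₀, n - r₀) ⊔ ⨆ (r : ℤ) (_ : r₀ + 1 ≤ r), Isp Wc F G (r, n - r) := by
          refine iSup₂_le fun r hr => ?_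
          rcases eq_or_lt_of_le hr with rfl | hlt
          · exact le_sup_left
          · exact le_sup_of_le_right (le_iSup₂ (f := fun r (_ : r₀ + 1 ≤ r) =>
              Isp Wc F G (r, n - r)) r (by omega))
        refine le_bot_iff.1 ?_
        intro x hx
        obtain ⟨hx1, hx2⟩ := hx
        simp only [SetLike.mem_coe] at hx1 hx2
        obtain ⟨i, hi, s2, hs2, hE⟩ := Submodule.mem_sup.1 (hsplit hx1)
        have hSF : (⨆ (r : ℤ) (_ : r₀ + 1 ≤ r), Isp Wc F G (r, n - r)) ≤
            F (r₀ + 1) ⊓ Wc n :=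
          iSup₂_le fun r hr => Isp_le_FW h.hW h.hF hr (by omega)
        have hiW : i ∈ Wc (n - 1) := by
          have hgr := grIndep h (show r₀ + (n - r₀) = n by ring)
          refine hgr (Submodule.mem_inf.2 ⟨?_, ?_⟩)
          · exact Submodule.mem_inf.2 ⟨(le_sup_left.trans (grEq h
              (show r₀ + (n - r₀) = n by ring)).le) hi |>.1,
              ((le_sup_left.trans (grEq h (show r₀ + (n - r₀) = n by ring)).le) hi).2⟩
          · have he : i = x - s2 := by rw [← hE]; abel
            rw [he]
            refine Submodule.sub_mem _ ?_ ?_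
            · exact Submodule.mem_sup_right (Submodule.mem_sup_right hx2)
            · exact Submodule.mem_sup_left (hSF hs2)
        have hi0 : i = 0 := by
          have : i ∈ Isp Wc F G (r₀, n - r₀) ⊓ Wc (n - 1) := ⟨hi, hiW⟩
          rwa [inj h (show r₀ + (n - r₀) = n by ring), Submodule.mem_bot] at this
        have hxS : x ∈ (⨆ (r : ℤ) (_ : r₀ + 1 ≤ r), Isp Wc F G (r, n - r)) ⊓ Wc (n - 1) := by
          refine ⟨?_, hx2⟩
          rw [← hE, hi0, zero_add]
          exact hs2
        rwa [ih (r₀ + 1) (by omega), Submodule.mem_bot] at hxS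
  exact AUX (cF - r₀).toNat r₀ (by omega)

lemma indepAux (h : MHData Wc F G a cF cG) :
    ∀ k : ℕ, ∀ n : ℤ, n ≤ a + k → ∀ pq : ℤ × ℤ, pq.1 + pq.2 ≤ n →
    Isp Wc F G pq ⊓ (⨆ (rs : ℤ × ℤ) (_ : rs ≠ pq ∧ rs.1 + rs.2 ≤ n), Isp Wc F G rs) = ⊥ := by
  intro k
  induction k with
  | zero =>
    intro n hn pq hpq
    refine le_bot_iff.1 (inf_le_left.trans ?_)
    rw [Isp_eq_bot_of_le h (by omega)]
  | succ k ih =>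
    intro n hn pq hpq
    rcases le_or_gt n (a + k) with hn' | hn'
    · exact ih n hn' pq hpq
    · obtain ⟨p, q⟩ := pq
      simp only at hpq
      have hX'W : (⨆ (rs : ℤ × ℤ) (_ : rs ≠ (p, q) ∧ rs.1 + rs.2 ≤ n - 1), Isp Wc F G rs)
          ≤ Wc (n - 1) :=
        iSup₂_le fun rs hrs => (Isp_le_W rs).trans (h.hW (by omega))
      have hsplit : (⨆ (rs : ℤ × ℤ) (_ : rs ≠ (p, q) ∧ rs.1 + rs.2 ≤ n), Isp Wc F G rs) ≤
          (⨆ (rs : ℤ × ℤ) (_ : rs ≠ (p, q) ∧ rs.1 + rs.2 ≤ n - 1), Isp Wc F G rs) ⊔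
          (⨆ (rs : ℤ × ℤ) (_ : rs ≠ (p, q) ∧ rs.1 + rs.2 = n), Isp Wc F G rs) := by
        refine iSup₂_le fun rs hrs => ?_
        rcases eq_or_lt_of_le hrs.2 with he | hlt
        · exact le_sup_of_le_right (le_iSup₂ (f := fun rs (_ : rs ≠ (p, q) ∧ rs.1 + rs.2 = n)
            => Isp Wc F G rs) rs ⟨hrs.1, he⟩)
        · exact le_sup_of_le_left (le_iSup₂ (f := fun rs (_ : rs ≠ (p, q) ∧ rs.1 + rs.2 ≤ n - 1)
            => Isp Wc F G rs) rs ⟨hrs.1, by omega⟩)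
      rcases eq_or_lt_of_le hpq with hc | hc
      · -- top-level case : p + q = n
        have hXn : (⨆ (rs : ℤ × ℤ) (_ : rs ≠ (p, q) ∧ rs.1 + rs.2 = n), Isp Wc F G rs) ≤
            F (p + 1) ⊓ Wc n ⊔ (G (q + 1) ⊓ Wc n ⊔ Wc (n - 1)) := by
          refine iSup₂_le fun rs hrs => ?_
          have hne : rs.1 ≠ p := by
            intro h1
            exact hrs.1 (Prod.ext h1 (by omega))
          rcases lt_or_ge p rs.1 with hlt | hle
          · exact le_sup_of_le_left (Isp_le_FW h.hW h.hF (by omega) (by omega))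
          · refine le_sup_of_le_right ?_
            refine inf_le_right.trans ((Kpart_mono h.hW h.hG (le_refl rs.2)
              (le_of_eq hrs.2)).trans ?_)
            refine sup_le ?_ ?_
            · exact le_sup_of_le_left (inf_le_inf (h.hG (by omega)) le_rfl)
            · exact le_sup_of_le_right ((Tpart_le_W h.hW _ _).trans (h.hW (by omega)))
        have hI12 : Isp Wc F G (p, q) ≤
            (F p ⊓ Wc n ⊔ Wc (n - 1)) ⊓ (G q ⊓ Wc n ⊔ Wc (n - 1)) :=
          le_sup_left.trans (grEq h hc).le
        have hthird : Isp Wc F G (p, q) ⊓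
            (⨆ (rs : ℤ × ℤ) (_ : rs ≠ (p, q) ∧ rs.1 + rs.2 ≤ n), Isp Wc F G rs)
            ≤ Wc (n - 1) := by
          refine le_trans (le_inf (inf_le_left.trans hI12) ?_) (grIndep h hc)
          exact inf_le_right.trans (hsplit.trans (sup_le
            (hX'W.trans (le_sup_of_le_right le_sup_right)) hXn))
        exact le_bot_iff.1 ((le_inf inf_le_left hthird).trans (le_of_eq (inj h hc)))
      · -- lower-weight case : p + q < n
        refine le_bot_iff.1 ?_
        intro x hx
        obtain ⟨hx1, hx2⟩ := hx
        simp only [SetLike.mem_coe] at hx1 hx2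
        have hxw : x ∈ Wc (n - 1) := (h.hW (show p + q ≤ n - 1 by omega)) (Isp_le_W (p, q) hx1)
        obtain ⟨x', hx', y, hy, hE⟩ := Submodule.mem_sup.1 (hsplit hx2)
        have hyW : y ∈ Wc (n - 1) := by
          have he : y = x - x' := by rw [← hE]; abel
          rw [he]
          exact Submodule.sub_mem _ hxw (hX'W hx')
        have hXnle : (⨆ (rs : ℤ × ℤ) (_ : rs ≠ (p, q) ∧ rs.1 + rs.2 = n), Isp Wc F G rs) ≤
            ⨆ (r : ℤ) (_ : a - cG ≤ r), Isp Wc F G (r, n - r) := by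
          refine iSup₂_le fun rs hrs => ?_
          obtain ⟨r, s⟩ := rs
          have hs : s = n - r := by
            have := hrs.2
            simp only at this
            omega
          subst hs
          rcases le_or_gt (a - cG) r with hr | hr
          · exact le_iSup₂ (f := fun r (_ : a - cG ≤ r) => Isp Wc F G (r, n - r)) r hr
          · refine le_trans inf_le_right ?_
            rw [Kpart_eq_bot h (show cG ≤ n - r by omega)
              (show cG + (r + (n - r) - a) ≤ n - r by omega)]
            exact bot_le
        have hy0 : y = 0 := by
          have hmem : y ∈ (⨆ (r : ℤ) (_ : a - cG ≤ r), Isp Wc F G (r, n - r)) ⊓ Wc (n - 1) :=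
            ⟨hXnle hy, hyW⟩
          rwa [levelIndep h n (a - cG), Submodule.mem_bot] at hmem
        have hxx : x = x' := by rw [← hE, hy0, add_zero]
        have hmem : x ∈ Isp Wc F G (p, q) ⊓
            (⨆ (rs : ℤ × ℤ) (_ : rs ≠ (p, q) ∧ rs.1 + rs.2 ≤ n - 1), Isp Wc F G rs) :=
          ⟨hx1, by rw [hxx]; exact hx'⟩
        rwa [ih (n - 1) (by omega) (p, q) (by omega), Submodule.mem_bot] at hmem

lemma indep (h : MHData Wc F G a cF cG) : iSupIndep (Isp Wc F G) := by
  intro pq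
  rw [disjoint_iff_inf_le]
  intro x hx
  obtain ⟨hx1, hx2⟩ := hx
  simp only [SetLike.mem_coe] at hx1 hx2
  have hsup : (⨆ (rs : ℤ × ℤ) (_ : rs ≠ pq), Isp Wc F G rs) ≤
      ⨆ (m : ℤ), ⨆ (rs : ℤ × ℤ) (_ : rs ≠ pq ∧ rs.1 + rs.2 ≤ m), Isp Wc F G rs :=
    iSup₂_le fun rs hrs => le_iSup_of_le (rs.1 + rs.2)
      (le_iSup₂ (f := fun rs' (_ : rs' ≠ pq ∧ rs'.1 + rs'.2 ≤ rs.1 + rs.2) => Isp Wc F G rs')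
        rs ⟨hrs, le_rfl⟩)
  have hmono : Monotone (fun m : ℤ => ⨆ (rs : ℤ × ℤ) (_ : rs ≠ pq ∧ rs.1 + rs.2 ≤ m),
      Isp Wc F G rs) := by
    intro m m' hm
    exact iSup₂_le fun rs hrs => le_iSup₂ (f := fun rs (_ : rs ≠ pq ∧ rs.1 + rs.2 ≤ m') =>
      Isp Wc F G rs) rs ⟨hrs.1, hrs.2.trans hm⟩
  obtain ⟨m, hm⟩ := (Submodule.mem_iSup_of_directed _ hmono.directed_le).1 (hsup hx2)
  set n := max m (pq.1 + pq.2) with hn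
  have hxn : x ∈ ⨆ (rs : ℤ × ℤ) (_ : rs ≠ pq ∧ rs.1 + rs.2 ≤ n), Isp Wc F G rs :=
    hmono (le_max_left m _) hm
  have hmem : x ∈ Isp Wc F G pq ⊓
      (⨆ (rs : ℤ × ℤ) (_ : rs ≠ pq ∧ rs.1 + rs.2 ≤ n), Isp Wc F G rs) := ⟨hx1, hxn⟩
  rwa [indepAux h (n - a).toNat n (by omega) pq (le_max_right m _), Submodule.mem_bot] at hmem


def Lsup (Wc F G : ℤ → Submodule R M) (p q : ℤ) : Submodule R M :=
  ⨆ (rs : ℤ × ℤ) (_ : rs.1 < p ∧ rs.2 < q), Isp Wc F G rs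

lemma Mstep (h : MHData Wc F G a cF cG) {p q n : ℤ} (hpq : p + q = n) {k : ℤ} (hk : 1 ≤ k) :
    Kpart Wc F p n ⊓ Kpart Wc G q n ⊓ Wc (n - k) ≤
      Lsup Wc F G p q ⊔ (Kpart Wc F p n ⊓ Kpart Wc G q n ⊓ Wc (n - k - 1)) := by
  rcases eq_or_lt_of_le hk with rfl | hk2
  · -- k = 1 : no new contribution, drop a weight
    refine le_sup_of_le_right (le_inf inf_le_left ?_)
    intro x hx
    obtain ⟨⟨hxf, hxg⟩, hxw⟩ := hx
    simp only [SetLike.mem_coe] at hxf hxg hxw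
    obtain ⟨f, hf, tf, htf, hEf⟩ := Submodule.mem_sup.1 hxf
    obtain ⟨g, hg, tg, htg, hEg⟩ := Submodule.mem_sup.1 hxg
    have htfw : tf ∈ Wc (n - 2) := Tpart_le_W h.hW p n htf
    have htgw : tg ∈ Wc (n - 2) := Tpart_le_W h.hW q n htg
    have hd := h.hD (n - 1) p
    rw [show n - 1 - p + 1 = q by omega, show n - 1 - 1 = n - 2 by ring] at hd
    have : x ∈ Wc (n - 2) := by
      refine le_of_eq hd (Submodule.mem_inf.2 ⟨?_, ?_⟩)
      · refine Submodule.mem_sup.2 ⟨f, ⟨hf.1, ?_⟩, tf, htfw, hEf⟩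
        have he : f = x - tf := by rw [← hEf]; abel
        rw [he]
        exact Submodule.sub_mem _ (by rwa [show n - (1:ℤ) = n - 1 by ring] at hxw)
          (h.hW (by omega) htfw)
      · refine Submodule.mem_sup.2 ⟨g, ⟨hg.1, ?_⟩, tg, htgw, hEg⟩
        have he : g = x - tg := by rw [← hEg]; abel
        rw [he]
        exact Submodule.sub_mem _ (by rwa [show n - (1:ℤ) = n - 1 by ring] at hxw)
          (h.hW (by omega) htgw)
    rwa [show n - 1 - 1 = n - 2 by ring]
  · -- k ≥ 2
    intro x hx
    obtain ⟨⟨hxf, hxg⟩, hxw⟩ := hx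
    simp only [SetLike.mem_coe] at hxf hxg hxw
    -- repackage the K-memberships at level n - k
    have hKsplit : ∀ (H : ℤ → Submodule R M) (u : ℤ), Antitone H →
        Kpart Wc H u n ≤ H (u - k + 1) ⊓ Wc n ⊔ Wc (n - k - 1) := by
      intro H u hH
      refine sup_le (le_sup_of_le_left (inf_le_inf (hH (by omega)) le_rfl))
        (iSup₂_le fun j hj => ?_)
      rcases le_or_gt j k with hjk | hjk
      · exact le_sup_of_le_left (inf_le_inf (hH (by omega)) (h.hW (by omega)))
      · exact le_sup_of_le_right (inf_le_right.trans (h.hW (by omega)))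
    have hxf2 : x ∈ F (p - k + 1) ⊓ Wc (n - k) ⊔ Wc (n - k - 1) := by
      obtain ⟨A, hA, B, hB, hE⟩ := Submodule.mem_sup.1 (hKsplit F p h.hF hxf)
      refine Submodule.mem_sup.2 ⟨A, ⟨hA.1, ?_⟩, B, hB, hE⟩
      have he : A = x - B := by rw [← hE]; abel
      rw [he]
      exact Submodule.sub_mem _ hxw (h.hW (by omega) hB)
    have hxg2 : x ∈ G (q - k + 1) ⊓ Wc (n - k) ⊔ Wc (n - k - 1) := by
      obtain ⟨A, hA, B, hB, hE⟩ := Submodule.mem_sup.1 (hKsplit G q h.hG hxg)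
      refine Submodule.mem_sup.2 ⟨A, ⟨hA.1, ?_⟩, B, hB, hE⟩
      have he : A = x - B := by rw [← hE]; abel
      rw [he]
      exact Submodule.sub_mem _ hxw (h.hW (by omega) hB)
    have hbi := biDecomp h (show (p - k + 1) + (q - k + 1) ≤ n - k by omega)
    rw [show n - k - 1 = n - k - 1 by rfl] at hbi
    have hx3 := hbi (Submodule.mem_inf.2 ⟨by rwa [show n - k - 1 = (n - k) - 1 by ring] at hxf2,
      by rwa [show n - k - 1 = (n - k) - 1 by ring] at hxg2⟩)
    obtain ⟨y, hy, w, hw, hE⟩ := Submodule.mem_sup.1 hx3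
    -- the sup part sits inside Lsup and inside M
    have hyL : (⨆ (r' : ℤ) (_ : p - k + 1 ≤ r' ∧ q - k + 1 ≤ n - k - r'),
        Isp Wc F G (r', n - k - r')) ≤ Lsup Wc F G p q := by
      refine iSup₂_le fun r' hr' => ?_
      exact le_iSup₂ (f := fun rs (_ : rs.1 < p ∧ rs.2 < q) => Isp Wc F G rs)
        (r', n - k - r') ⟨show r' < p by omega, show n - k - r' < q by omega⟩
    have hyM : (⨆ (r' : ℤ) (_ : p - k + 1 ≤ r' ∧ q - k + 1 ≤ n - k - r'),
        Isp Wc F G (r', n - k - r')) ≤ Kpart Wc F p n ⊓ Kpart Wc G q n := by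
      refine iSup₂_le fun r' hr' => le_inf ?_ ?_
      · refine le_trans (Isp_le_FW h.hW h.hF (le_refl r') le_rfl :
          Isp Wc F G (r', n - k - r') ≤ F r' ⊓ Wc (r' + (n - k - r'))) ?_
        have hterm : F r' ⊓ Wc (r' + (n - k - r')) ≤ F (p - k + 1) ⊓ Wc (n - k) :=
          inf_le_inf (h.hF (by omega)) (h.hW (by omega))
        exact hterm.trans (le_sup_of_le_right (le_iSup₂
          (f := fun j (_ : (2:ℤ) ≤ j) => F (p - j + 1) ⊓ Wc (n - j)) k (by omega)))
      · refine inf_le_right.trans ?_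
        refine le_sup_of_le_right ?_
        refine le_trans (le_of_eq (by rw [show r' + (n - k - r') = n - k by ring]))
          (Kpart_le_Tpart h.hW h.hG (show n - k - r' < q by omega)
            (show (n - k) - (n - k - r') < n - q by omega))
    refine Submodule.mem_sup.2 ⟨y, hyL hy, w, ?_, hE⟩
    have hwM : w ∈ Kpart Wc F p n ⊓ Kpart Wc G q n := by
      have he : w = x - y := by rw [← hE]; abel
      rw [he]
      exact Submodule.sub_mem _ ⟨hxf, hxg⟩ (hyM hy)
    exact ⟨hwM, hw⟩


lemma Mlow (h : MHData Wc F G a cF cG) {p q n : ℤ} (hpq : p + q = n) :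
    Kpart Wc F p n ⊓ Kpart Wc G q n ⊓ Wc (n - 1) ≤ Lsup Wc F G p q := by
  have AUX : ∀ k : ℕ, Kpart Wc F p n ⊓ Kpart Wc G q n ⊓ Wc (n - 1) ≤
      Lsup Wc F G p q ⊔ (Kpart Wc F p n ⊓ Kpart Wc G q n ⊓ Wc (n - 1 - k)) := by
    intro k
    induction k with
    | zero =>
      refine le_sup_of_le_right (le_of_eq ?_)
      norm_num
    | succ k ih =>
      refine ih.trans (sup_le le_sup_left ?_)
      have hstep := Mstep h hpq (show (1:ℤ) ≤ (k:ℤ) + 1 by omega)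
      refine le_trans (le_of_eq (by rw [show n - 1 - (k:ℤ) = n - ((k:ℤ) + 1) by ring]))
        (hstep.trans (sup_le le_sup_left (le_sup_of_le_right
          (inf_le_inf le_rfl (h.hW (le_of_eq (by push_cast; ring)))))))
  refine (AUX (n - 1 - a).toNat).trans (sup_le le_rfl ?_)
  rw [h.hWa (n - 1 - ((n - 1 - a).toNat : ℤ)) (by omega)]
  exact inf_le_right.trans bot_le

lemma Kpart_le_H (hW : Monotone Wc) (q n : ℤ) :
    Kpart Wc G q n ≤ G q ⊓ Wc n ⊔ Wc (n - 1) :=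
  sup_le le_sup_left (le_sup_of_le_right ((Tpart_le_W hW q n).trans (hW (by omega))))

lemma cong (h : MHData Wc F G a cF cG) (p q : ℤ) :
    Isp Wc G F (q, p) ≤ Isp Wc F G (p, q) ⊔ Lsup Wc F G p q := by
  intro x hx
  obtain ⟨⟨hxG, hxW⟩, hxK⟩ := hx
  simp only [SetLike.mem_coe] at hxG hxW hxK
  rw [show q + p = p + q by ring] at hxW hxK
  have hxM : x ∈ Kpart Wc F p (p + q) ⊓ Kpart Wc G q (p + q) :=
    ⟨hxK, Submodule.mem_sup_left ⟨hxG, hxW⟩⟩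
  have hxH : x ∈ (F p ⊓ Wc (p + q) ⊔ Wc (p + q - 1)) ⊓
      (G q ⊓ Wc (p + q) ⊔ Wc (p + q - 1)) :=
    ⟨Kpart_le_H h.hW p (p + q) hxK, Submodule.mem_sup_left ⟨hxG, hxW⟩⟩
  obtain ⟨i, hi, w, hw, hE⟩ := Submodule.mem_sup.1 (grSurj h rfl hxH)
  have hiM : i ∈ Kpart Wc F p (p + q) ⊓ Kpart Wc G q (p + q) := by
    obtain ⟨hi1, hi2⟩ := hi
    simp only [SetLike.mem_coe] at hi1 hi2
    exact ⟨Submodule.mem_sup_left hi1, hi2⟩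
  have hwL : w ∈ Lsup Wc F G p q := by
    refine Mlow h rfl (Submodule.mem_inf.2 ⟨?_, hw⟩)
    have he : w = x - i := by rw [← hE]; abel
    rw [he]
    exact Submodule.sub_mem _ hxM hiM
  exact Submodule.mem_sup.2 ⟨i, hi, w, hwL, hE⟩

lemma eq_of_le_of_span {ι : Type*} (J I : ι → Submodule R M) (hle : ∀ i, J i ≤ I i)
    (hsp : ⨆ i, J i = ⊤) (hind : iSupIndep I) : J = I := by
  funext i
  refine le_antisymm (hle i) ?_
  have h1 : I i ≤ J i ⊔ ⨆ (j : ι) (_ : j ≠ i), I j := by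
    refine le_trans (le_top.trans (le_of_eq hsp.symm)) (iSup_le fun j => ?_)
    rcases eq_or_ne j i with rfl | hj
    · exact le_sup_left
    · exact le_sup_of_le_right ((hle j).trans (le_iSup₂ (f := fun j (_ : j ≠ i) => I j) j hj))
  have h2 : I i = (J i ⊔ ⨆ (j : ι) (_ : j ≠ i), I j) ⊓ I i := (inf_eq_right.2 h1).symm
  rw [h2, sup_inf_assoc_of_le _ (hle i)]
  have h3 : (⨆ (j : ι) (_ : j ≠ i), I j) ⊓ I i = ⊥ := by
    rw [inf_comm]
    exact disjoint_iff.1 (hind i)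
  rw [h3, sup_bot_eq]

lemma uniq_le (h : MHData Wc F G a cF cG) (J Js : ℤ × ℤ → Submodule R M)
    (hJW : ∀ n, Wc n = ⨆ (pq : ℤ × ℤ) (_ : pq.1 + pq.2 ≤ n), J pq)
    (hJF : ∀ pq : ℤ × ℤ, J pq ≤ F pq.1)
    (hJs : ∀ p q : ℤ, Js (q, p) ≤ G q ⊓ Wc (p + q))
    (hJc : ∀ p q : ℤ, J (p, q) ≤ Js (q, p) ⊔ ⨆ (rs : ℤ × ℤ) (_ : rs.1 < p ∧ rs.2 < q), J rs) :
    ∀ pq, J pq ≤ Isp Wc F G pq := by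
  have hJWle : ∀ pq : ℤ × ℤ, J pq ≤ Wc (pq.1 + pq.2) := by
    intro pq
    rw [hJW (pq.1 + pq.2)]
    exact le_iSup₂ (f := fun rs (_ : rs.1 + rs.2 ≤ pq.1 + pq.2) => J rs) pq le_rfl
  have MAIN : ∀ k : ℕ, ∀ p q : ℤ, p + q ≤ a + k → J (p, q) ≤ Kpart Wc G q (p + q) := by
    intro k
    induction k with
    | zero =>
      intro p q hpq
      refine (hJWle (p, q)).trans ?_
      rw [h.hWa (p + q) (by push_cast at hpq; omega)]
      exact bot_le
    | succ k ih =>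
      intro p q hpq
      refine (hJc p q).trans (sup_le ((hJs p q).trans le_sup_left) ?_)
      refine iSup₂_le fun rs hrs => ?_
      obtain ⟨r, s⟩ := rs
      obtain ⟨hr, hs⟩ := hrs
      simp only at hr hs
      refine (ih r s (by omega)).trans (le_sup_of_le_right ?_)
      exact Kpart_le_Tpart h.hW h.hG (by omega) (by omega)
  intro pq
  obtain ⟨p, q⟩ := pq
  exact le_inf (le_inf (hJF (p, q)) (hJWle (p, q))) (MAIN (p + q - a).toNat p q (by omega))


end DeligneAux

open DeligneAux

section MapIsp
variable {V : Type*} [AddCommGroup V] [Module ℝ V]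

lemma mapSigma_Isp {Wc F G : ℤ → Submodule ℂ (ℂ ⊗[ℝ] V)}
    (hWσ : ∀ n, (Wc n).map (sigmaC V) = Wc n)
    (hGF : ∀ q, G q = (F q).map (sigmaC V)) (pq : ℤ × ℤ) :
    (Isp Wc F G pq).map (sigmaC V) = Isp Wc G F pq := by
  simp only [Isp, Kpart, Tpart, mapSigma_inf, mapSigma_sup, mapSigma_iSup, hWσ, hGF,
    mapSigma_mapSigma]

lemma antitoneF {F : ℤ → Submodule ℂ (ℂ ⊗[ℝ] V)} (hF : ∀ p : ℤ, F (p + 1) ≤ F p) :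
    Antitone F := by
  have h2 : ∀ p q : ℤ, p ≤ q → F q ≤ F p := fun p =>
    Int.le_induction le_rfl (fun n _ ih => (hF n).trans ih)
  exact fun p q h => h2 p q h

end MapIsp

/-- A mixed Hodge structure on a real vector space `V`: an increasing, bounded, exhaustive
weight filtration `W` of `V` by real subspaces and a decreasing, bounded, exhaustive Hodge
filtration `F` of `V_ℂ = ℂ ⊗[ℝ] V` by complex subspaces, such that for every `n` the
filtration induced by `F` on `Gr^W_n = W_n / W_{n-1}` is a Hodge filtration of weight `n`.

Identifying the complexification of `Gr^W_n` with `(W_n)_ℂ / (W_{n-1})_ℂ` (where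
`(W_n)_ℂ := (W n).baseChange ℂ ⊆ V_ℂ`), the Hodge filtration condition of weight `n` on
`Gr^W_n` — namely `F^p(Gr^W_n)_ℂ ⊕ σ(F^{n-p+1}(Gr^W_n)_ℂ) = (Gr^W_n)_ℂ` for all `p`, where
`F^p(Gr^W_n)_ℂ` is the image of `F^p ⊓ (W_n)_ℂ` — is expressed below by pulling back along
the quotient map `(W_n)_ℂ → (W_n)_ℂ / (W_{n-1})_ℂ`: the first displayed equation is the
disjointness of the two images in the quotient, the second their spanning of the quotient. -/
def IsMixedHodgeStructure (V : Type*) [AddCommGroup V] [Module ℝ V]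
    (W : ℤ → Submodule ℝ V) (F : ℤ → Submodule ℂ (ℂ ⊗[ℝ] V)) : Prop :=
  Monotone W ∧
  (∃ a : ℤ, ∀ n ≤ a, W n = ⊥) ∧
  (∃ b : ℤ, ∀ n ≥ b, W n = ⊤) ∧
  (∀ p : ℤ, F (p + 1) ≤ F p) ∧
  (∃ a : ℤ, ∀ p ≤ a, F p = ⊤) ∧
  (∃ b : ℤ, ∀ p ≥ b, F p = ⊥) ∧
  (∀ n p : ℤ,
    ((F p ⊓ (W n).baseChange ℂ) ⊔ (W (n - 1)).baseChange ℂ) ⊓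
        (((F (n - p + 1) ⊓ (W n).baseChange ℂ).map (sigmaC V)) ⊔ (W (n - 1)).baseChange ℂ)
      = (W (n - 1)).baseChange ℂ ∧
    (F p ⊓ (W n).baseChange ℂ) ⊔ ((F (n - p + 1) ⊓ (W n).baseChange ℂ).map (sigmaC V))
        ⊔ (W (n - 1)).baseChange ℂ
      = (W n).baseChange ℂ)

/-- The Deligne splitting conditions for a bigrading `I^{p,q}` of `V_ℂ` attached to a mixed
Hodge structure `(W, F)`: (i) `V_ℂ = ⊕ I^{p,q}`; (ii) `(W_n)_ℂ = ⊕_{p+q≤n} I^{p,q}`;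
(iii) `F^p = ⊕_{r≥p} I^{r,s}`; (iv) `I^{p,q} ≡ σ(I^{q,p})` modulo `⊕_{r<p,s<q} I^{r,s}`,
i.e. their images in the quotient of `V_ℂ` by `⊕_{r<p,s<q} I^{r,s}` coincide. -/
def IsDeligneSplitting (V : Type*) [AddCommGroup V] [Module ℝ V]
    (W : ℤ → Submodule ℝ V) (F : ℤ → Submodule ℂ (ℂ ⊗[ℝ] V))
    (I : ℤ × ℤ → Submodule ℂ (ℂ ⊗[ℝ] V)) : Prop :=
  DirectSum.IsInternal I ∧
  (∀ n : ℤ, (W n).baseChange ℂ = ⨆ (pq : ℤ × ℤ) (_ : pq.1 + pq.2 ≤ n), I pq) ∧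
  (∀ p : ℤ, F p = ⨆ (pq : ℤ × ℤ) (_ : p ≤ pq.1), I pq) ∧
  (∀ p q : ℤ,
    (I (p, q)).map (⨆ (pq : ℤ × ℤ) (_ : pq.1 < p ∧ pq.2 < q), I pq).mkQ =
      ((I (q, p)).map (sigmaC V)).map
        (⨆ (pq : ℤ × ℤ) (_ : pq.1 < p ∧ pq.2 < q), I pq).mkQ)

/-- Deligne splitting. Every mixed Hodge structure `(W, F)` on a
finite-dimensional real vector space `V` admits a unique Deligne splitting, i.e. a unique
family of complex subspaces `I^{p,q} ⊆ V_ℂ` such that `V_ℂ = ⊕ I^{p,q}`,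
`(W_n)_ℂ = ⊕_{p+q≤n} I^{p,q}`, `F^p = ⊕_{r≥p} I^{r,s}`, and
`I^{p,q} ≡ σ(I^{q,p})` modulo `⊕_{r<p,s<q} I^{r,s}`. -/
theorem deligne_splitting_exists_unique (V : Type*) [AddCommGroup V] [Module ℝ V]
    [FiniteDimensional ℝ V]
    (W : ℤ → Submodule ℝ V) (F : ℤ → Submodule ℂ (ℂ ⊗[ℝ] V))
    (hWF : IsMixedHodgeStructure V W F) :
    ∃! I : ℤ × ℤ → Submodule ℂ (ℂ ⊗[ℝ] V), IsDeligneSplitting V W F I := by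
  classical
  obtain ⟨hWmono, ⟨a, hWa⟩, ⟨b, hWb⟩, hFdec, ⟨dF, hFtop⟩, ⟨cF, hFbot⟩, hDS⟩ := hWF
  have hFanti : Antitone F := antitoneF hFdec
  have hGW : ∀ q n : ℤ, (F q ⊓ (W n).baseChange ℂ).map (sigmaC V)
      = (F q).map (sigmaC V) ⊓ (W n).baseChange ℂ := by
    intro q n
    rw [mapSigma_inf, mapSigma_baseChange]
  have hData : MHData (fun n => (W n).baseChange ℂ) F (fun q => (F q).map (sigmaC V)) a cF cF :=
    { hW := fun m n h => baseChange_mono (hWmono h)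
      hWa := fun n hn => by rw [hWa n hn, Submodule.baseChange_bot]
      hF := hFanti
      hG := fun p q h => Submodule.map_mono (hFanti h)
      hFc := fun p hp => hFbot p hp
      hGc := fun q hq => by rw [hFbot q hq, Submodule.map_bot]
      hD := fun n p => by have hd := (hDS n p).1; rwa [hGW] at hd
      hS := fun n p => by have hs := (hDS n p).2; rwa [hGW] at hs }
  set Wc : ℤ → Submodule ℂ (ℂ ⊗[ℝ] V) := fun n => (W n).baseChange ℂ with hWc
  set G : ℤ → Submodule ℂ (ℂ ⊗[ℝ] V) := fun q => (F q).map (sigmaC V) with hGdef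
  have hWσ : ∀ n, (Wc n).map (sigmaC V) = Wc n := fun n => mapSigma_baseChange (W n)
  have hTop : Wc b = ⊤ := by rw [hWc]; simp only; rw [hWb b le_rfl, Submodule.baseChange_top]
  have hsupI : ⨆ pq, Isp Wc F G pq = ⊤ := by
    refine le_antisymm le_top ?_
    calc (⊤ : Submodule ℂ (ℂ ⊗[ℝ] V)) = Wc b := hTop.symm
      _ = ⨆ (pq : ℤ × ℤ) (_ : pq.1 + pq.2 ≤ b), Isp Wc F G pq := Wspan hData b
      _ ≤ ⨆ pq, Isp Wc F G pq := iSup₂_le fun pq _ => le_iSup (Isp Wc F G) pq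
  -- the congruence, both ways
  have hLGF : ∀ p q : ℤ, Lsup Wc G F q p ≤ Lsup Wc F G p q := by
    intro p q
    refine iSup₂_le fun rs hrs => ?_
    obtain ⟨r, s⟩ := rs
    obtain ⟨hr, hs⟩ := hrs
    simp only at hr hs
    refine (cong hData s r).trans (sup_le ?_ ?_)
    · exact le_iSup₂ (f := fun rs (_ : rs.1 < p ∧ rs.2 < q) => Isp Wc F G rs) (s, r) ⟨hs, hr⟩
    · exact iSup₂_le fun uv huv => le_iSup₂ (f := fun rs (_ : rs.1 < p ∧ rs.2 < q) =>
        Isp Wc F G rs) uv ⟨by omega, by omega⟩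
  have hcong1 : ∀ p q : ℤ, Isp Wc G F (q, p) ≤ Isp Wc F G (p, q) ⊔ Lsup Wc F G p q :=
    fun p q => cong hData p q
  have hcong2 : ∀ p q : ℤ, Isp Wc F G (p, q) ≤ Isp Wc G F (q, p) ⊔ Lsup Wc F G p q :=
    fun p q => (cong hData.swap q p).trans (sup_le le_sup_left ((hLGF p q).trans le_sup_right))
  refine ⟨Isp Wc F G, ⟨?_, ?_, ?_, ?_⟩, ?_⟩
  · exact DirectSum.isInternal_submodule_of_iSupIndep_of_iSup_eq_top (indep hData) hsupI
  · exact fun n => Wspan hData n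
  · intro p
    refine le_antisymm ?_ (iSup₂_le fun pq hpq => (Isp_le_F pq).trans (hFanti hpq))
    calc F p = F p ⊓ Wc b := by rw [hTop, inf_top_eq]
      _ = ⨆ (pq : ℤ × ℤ) (_ : p ≤ pq.1 ∧ pq.1 + pq.2 ≤ b), Isp Wc F G pq := Fspan hData p b
      _ ≤ ⨆ (pq : ℤ × ℤ) (_ : p ≤ pq.1), Isp Wc F G pq :=
          iSup₂_le fun pq hpq => le_iSup₂ (f := fun pq (_ : p ≤ pq.1) => Isp Wc F G pq)
            pq hpq.1
  · intro p q
    have hmap : (Isp Wc F G (q, p)).map (sigmaC V) = Isp Wc G F (q, p) :=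
      mapSigma_Isp hWσ (fun q => rfl) (q, p)
    have hL : (Lsup Wc F G p q).map (Lsup Wc F G p q).mkQ = ⊥ := by
      refine le_bot_iff.1 (Submodule.map_le_iff_le_comap.2 ?_)
      rw [Submodule.comap_bot, Submodule.ker_mkQ]
    show (Isp Wc F G (p, q)).map (Lsup Wc F G p q).mkQ
      = ((Isp Wc F G (q, p)).map (sigmaC V)).map (Lsup Wc F G p q).mkQ
    rw [hmap]
    refine le_antisymm ?_ ?_
    · refine le_trans (Submodule.map_mono (hcong2 p q)) ?_
      rw [Submodule.map_sup, hL, sup_bot_eq]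
    · refine le_trans (Submodule.map_mono (hcong1 p q)) ?_
      rw [Submodule.map_sup, hL, sup_bot_eq]
  · -- uniqueness
    intro J hJ
    obtain ⟨hJi, hJWsp, hJFsp, hJσ⟩ := hJ
    have hJF : ∀ pq : ℤ × ℤ, J pq ≤ F pq.1 := by
      intro pq
      rw [hJFsp pq.1]
      exact le_iSup₂ (f := fun rs (_ : pq.1 ≤ rs.1) => J rs) pq le_rfl
    have hJWle : ∀ pq : ℤ × ℤ, J pq ≤ Wc (pq.1 + pq.2) := by
      intro pq
      rw [hWc]
      simp only
      rw [hJWsp (pq.1 + pq.2)]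
      exact le_iSup₂ (f := fun rs (_ : rs.1 + rs.2 ≤ pq.1 + pq.2) => J rs) pq le_rfl
    have hJs : ∀ p q : ℤ, (J (q, p)).map (sigmaC V) ≤ G q ⊓ Wc (p + q) := by
      intro p q
      refine le_trans (Submodule.map_mono (le_inf (hJF (q, p)) (hJWle (q, p)))) ?_
      rw [show ((q, p) : ℤ × ℤ).1 + ((q, p) : ℤ × ℤ).2 = p + q by simp [add_comm]]
      rw [hWc]
      simp only
      rw [mapSigma_inf, mapSigma_baseChange]
    have hJc : ∀ p q : ℤ, J (p, q) ≤ (J (q, p)).map (sigmaC V) ⊔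
        ⨆ (rs : ℤ × ℤ) (_ : rs.1 < p ∧ rs.2 < q), J rs := by
      intro p q
      intro x hx
      have h1 := hJσ p q
      have h2 : (⨆ (rs : ℤ × ℤ) (_ : rs.1 < p ∧ rs.2 < q), J rs).mkQ x ∈
          ((J (q, p)).map (sigmaC V)).map
            (⨆ (rs : ℤ × ℤ) (_ : rs.1 < p ∧ rs.2 < q), J rs).mkQ := by
        rw [← h1]
        exact Submodule.mem_map_of_mem hx
      obtain ⟨y, hy, hxy⟩ := h2
      have hsub : y - x ∈ ⨆ (rs : ℤ × ℤ) (_ : rs.1 < p ∧ rs.2 < q), J rs := by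
        rw [← Submodule.ker_mkQ (⨆ (rs : ℤ × ℤ) (_ : rs.1 < p ∧ rs.2 < q), J rs),
          LinearMap.mem_ker, map_sub, hxy, sub_self]
      refine Submodule.mem_sup.2 ⟨y, hy, x - y, ?_, by abel⟩
      have he : x - y = -(y - x) := by abel
      rw [he]
      exact Submodule.neg_mem _ hsub
    have hJle := uniq_le hData J (fun rs => (J rs).map (sigmaC V)) hJWsp hJF hJs hJc
    exact eq_of_le_of_span J (Isp Wc F G) hJle hJi.submodule_iSup_eq_top (indep hData)
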